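/- arXiv:2302.12782 — 8 statements merged into one kernel-verified Lean document; each statement's English description precedes it below -/
import Mathlib

section
/- For every even natural number n ≥ 2 one has ∑_{k=0}^{n/2 - 1} (n - 2k) · C(n,k)² = n · C(n-1, n/2)². -/
theorem stmt_1 (n : ℕ) (hn : 2 ≤ n) (heven : Even n) :
    ∑ k ∈ Finset.range (n / 2), (n - 2 * k) * (n.choose k) ^ 2
      = n * ((n - 1).choose (n / 2)) ^ 2 := by
  obtain ⟨m, rfl⟩ := heven
  have hm1 : 1 ≤ m := by omega
  have h2 : (m + m) / 2 = m := by omega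
  rw [h2]
  -- reduce to an integer identity
  rw [← Nat.cast_inj (R := ℤ)]
  push_cast
  -- define the telescoping function
  set f : ℕ → ℤ := fun k => if k = 0 then 0
    else ((m : ℤ) + m) * (((m + m - 1).choose (k - 1) : ℤ))^2 with hf
  have hstep : ∀ k ∈ Finset.range m,
      ((↑(m + m - 2 * k) : ℤ)) * ((m + m).choose k : ℤ)^2 = f (k + 1) - f k := by
    intro k hk
    rw [Finset.mem_range] at hk
    have hcast : ((↑(m + m - 2 * k) : ℤ)) = (m : ℤ) + m - 2 * k := by
      have : 2 * k ≤ m + m := by omega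
      push_cast [Nat.cast_sub this]
      ring
    rw [hcast]
    match k with
    | 0 =>
      simp [hf, Nat.choose_zero_right]
    | k + 1 =>
      simp only [hf, Nat.succ_ne_zero, if_false, Nat.add_sub_cancel]
      -- Pascal : C(m+m, k+1) = C(m+m-1, k) + C(m+m-1, k+1)
      have hn1 : m + m - 1 + 1 = m + m := by omega
      have hpascal : (m + m).choose (k + 1)
          = (m + m - 1).choose k + (m + m - 1).choose (k + 1) := by
        conv_lhs => rw [← hn1]
        exact Nat.choose_succ_succ _ _
      have hmul : (m + m - 1 + 1) * (m + m - 1).choose k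
          = (m + m - 1 + 1).choose (k + 1) * (k + 1) :=
        Nat.add_one_mul_choose_eq _ _
      rw [hn1] at hmul
      have hpascal' : ((m + m).choose (k + 1) : ℤ)
          = (m + m - 1).choose k + (m + m - 1).choose (k + 1) := by
        exact_mod_cast congrArg (Nat.cast : ℕ → ℤ) hpascal
      have hmul' : ((m : ℤ) + m) * ((m + m - 1).choose k : ℤ)
          = ((m + m).choose (k + 1) : ℤ) * (k + 1) := by
        exact_mod_cast hmul
      set a : ℤ := ((m + m - 1).choose (k + 1) : ℤ)
      set b : ℤ := ((m + m - 1).choose k : ℤ)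
      set c : ℤ := ((m + m).choose (k + 1) : ℤ)
      push_cast
      linear_combination (((m : ℤ) + m) * (c - b + a)) * hpascal' + (2 * c) * hmul'
  rw [Finset.sum_congr rfl hstep, Finset.sum_range_sub f m]
  have hm0 : m ≠ 0 := by omega
  simp only [hf, hm0, if_false, if_pos rfl]
  have hsymm : (m + m - 1).choose (m - 1) = (m + m - 1).choose m := by
    have h1 : m ≤ m + m - 1 := by omega
    have h2 : m + m - 1 - m = m - 1 := by omega
    rw [← h2]
    exact Nat.choose_symm h1
  rw [hsymm]
  ring
end

section
/- For every odd natural number n ≥ 3 one has 1 + ∑_{k=1}^{(n-1)/2} (n - 2k) · C(n,k)² + (n - 1) = n · C(n-1, (n-1)/2)²; equivalently, 1 + ∑_{d odd, 1≤d≤n-2} d · C(n,(n-d)/2)² = n · C(n-1,(n-1)/2)² − (n − 1). -/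
lemma key_step (n k : ℕ) (hk : 1 ≤ k) (h2k : 2 * k < n) :
    (n - 2 * k) * (n.choose k) ^ 2 + n * ((n - 1).choose (k - 1)) ^ 2
      = n * ((n - 1).choose k) ^ 2 := by
  have hn1 : n - 1 + 1 = n := by omega
  have hk1 : k - 1 + 1 = k := by omega
  have e1 : (n - 1).choose k * n = n.choose k * (n - k) := by
    have := Nat.choose_mul_succ_eq (n - 1) k
    rwa [hn1] at this
  have e2 : n * (n - 1).choose (k - 1) = n.choose k * k := by
    have := Nat.add_one_mul_choose_eq (n - 1) (k - 1)
    simpa only [Nat.succ_eq_add_one, hn1, hk1] using this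
  have e3 : n.choose k = (n - 1).choose (k - 1) + (n - 1).choose k := by
    have := Nat.choose_succ_succ (n - 1) (k - 1)
    simpa only [Nat.succ_eq_add_one, hn1, hk1] using this
  have hkn : k ≤ n := by omega
  zify [show 2 * k ≤ n by omega, show k ≤ n by omega] at *
  linear_combination (-(((n - 1).choose k : ℤ) + ((n - 1).choose (k - 1) : ℤ))) * e1 +
    (((n - 1).choose k : ℤ) + ((n - 1).choose (k - 1) : ℤ)) * e2 +
    ((n : ℤ) - 2 * (k : ℤ)) * (n.choose k : ℤ) * e3

lemma tele (n : ℕ) (hn : 1 ≤ n) : ∀ m : ℕ, 2 * m < n →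
    (∑ k ∈ Finset.Icc 1 m, (n - 2 * k) * (n.choose k) ^ 2) + n
      = n * ((n - 1).choose m) ^ 2 := by
  intro m
  induction m with
  | zero => simp
  | succ m ih =>
      intro h
      rw [Finset.sum_Icc_succ_top (by omega), add_right_comm,
        ih (by omega), ← key_step n (m + 1) (by omega) h, Nat.add_sub_cancel]
      exact add_comm _ _

theorem stmt_2 (n : ℕ) (hn : 3 ≤ n) (hodd : Odd n) :
    1 + (∑ k ∈ Finset.Icc 1 ((n - 1) / 2), (n - 2 * k) * (n.choose k) ^ 2) + (n - 1)
      = n * ((n - 1).choose ((n - 1) / 2)) ^ 2 := by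
  obtain ⟨m, rfl⟩ := hodd
  have h := tele (2 * m + 1) (by omega) ((2 * m + 1 - 1) / 2) (by omega)
  omega
end

section
/- For every even natural number n ≥ 2 one has C(n, n/2)² + ∑_{k=0}^{n/2 - 1} (n - 2k) · C(n,k)² = (n + 4) · C(n-1, n/2)². -/
theorem stmt_3 (n : ℕ) (hn : 2 ≤ n) (heven : Even n) :
    (n.choose (n / 2)) ^ 2 + ∑ k ∈ Finset.range (n / 2), (n - 2 * k) * (n.choose k) ^ 2
      = (n + 4) * ((n - 1).choose (n / 2)) ^ 2 := by
  obtain ⟨m, hm⟩ := heven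
  have hm2 : n = 2 * m := by omega
  subst hm2
  have hm1 : 1 ≤ m := by omega
  rw [Nat.mul_div_cancel_left m (by norm_num)]
  have hcast : ∀ a b : ℕ, (a : ℤ) = b → a = b := fun a b h => by exact_mod_cast h
  apply hcast
  push_cast
  have hsum : ∑ k ∈ Finset.range m, (((2*m - 2*k : ℕ) : ℤ) * ((2*m).choose k : ℤ)^2)
      = ∑ k ∈ Finset.range m, ((2*(m:ℤ) - 2*k) * ((2*m).choose k : ℤ)^2) := by
    apply Finset.sum_congr rfl
    intro k hk
    have hk' : k < m := Finset.mem_range.mp hk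
    have h2k : 2*k ≤ 2*m := by omega
    have : ((2*m - 2*k : ℕ) : ℤ) = 2*(m:ℤ) - 2*k := by
      push_cast [Nat.cast_sub h2k]; ring
    rw [this]
  rw [hsum]
  set g : ℕ → ℤ := fun j => if j = 0 then 0 else ((2*m-1).choose (j-1) : ℤ)^2 with hg
  have hpt : ∀ k ∈ Finset.range m,
      (2*(m:ℤ) - 2*k) * ((2*m).choose k : ℤ)^2 = (2*m) * (g (k+1) - g k) := by
    intro k hk
    have hk' : k < m := Finset.mem_range.mp hk
    match k with
    | 0 => simp [hg]
    | j+1 =>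
      have hsucc : (2*m - 1).succ = 2*m := by omega
      have h1 : (2*m) * (2*m-1).choose j = (2*m).choose (j+1) * (j+1) := by
        have := Nat.add_one_mul_choose_eq (2*m-1) j
        rwa [show 2*m-1+1 = 2*m by omega] at this
      have h2 : (2*m-1).choose (j+1) * (2*m) = (2*m).choose (j+1) * (2*m - (j+1)) := by
        have := Nat.choose_mul_succ_eq (2*m-1) (j+1)
        have h' : 2*m - 1 + 1 = 2*m := by omega
        rwa [h'] at this
      have h1' : (2*(m:ℤ)) * ((2*m-1).choose j : ℤ) = ((2*m).choose (j+1) : ℤ) * (j+1) := by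
        exact_mod_cast congrArg (Nat.cast : ℕ → ℤ) h1
      have h2' : ((2*m-1).choose (j+1) : ℤ) * (2*m) = ((2*m).choose (j+1) : ℤ) * (2*m - (j+1)) := by
        have hle : (j+1) ≤ 2*m := by omega
        have := congrArg (Nat.cast : ℕ → ℤ) h2
        push_cast [Nat.cast_sub hle] at this
        linarith [this]
      have hg1 : g (j+1+1) = ((2*m-1).choose (j+1) : ℤ)^2 := by simp [hg]
      have hg2 : g (j+1) = ((2*m-1).choose j : ℤ)^2 := by simp [hg]
      rw [hg1, hg2]
      have hm0 : (2*(m:ℤ))^2 ≠ 0 := by positivity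
      apply mul_left_cancel₀ hm0
      push_cast
      have e1 : (2*(m:ℤ) * ((2*m-1).choose j : ℤ))^2 = (((2*m).choose (j+1) : ℤ) * ((j:ℤ)+1))^2 := by
        rw [h1']
      have e2 : (((2*m-1).choose (j+1) : ℤ) * (2*(m:ℤ)))^2 = (((2*m).choose (j+1) : ℤ) * (2*(m:ℤ) - ((j:ℤ)+1)))^2 := by
        rw [h2']
      linear_combination 2*(m:ℤ)*e1 - 2*(m:ℤ)*e2
  rw [Finset.sum_congr rfl hpt, ← Finset.mul_sum, Finset.sum_range_sub g m]
  have hgm : g m = ((2*m-1).choose (m-1) : ℤ)^2 := by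
    have hmne : m ≠ 0 := by omega
    simp [hg, hmne]
  have hg0 : g 0 = 0 := by simp [hg]
  rw [hgm, hg0]
  have hsymm : (2*m-1).choose (m-1) = (2*m-1).choose m := by
    have : (2*m-1) - m = m - 1 := by omega
    rw [← this, Nat.choose_symm (by omega)]
  have hdouble : (2*m).choose m = 2 * (2*m-1).choose m := by
    obtain ⟨p, hp⟩ : ∃ p, 2*m - 1 = p := ⟨2*m-1, rfl⟩
    obtain ⟨q, hq⟩ : ∃ q, m = q + 1 := ⟨m-1, by omega⟩
    have hp1 : 2*m = p + 1 := by omega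
    rw [hp, hq] at hsymm
    have hq' : q + 1 - 1 = q := by omega
    rw [hq'] at hsymm
    rw [hp1, hq, Nat.choose_succ_succ', Nat.add_sub_cancel]
    omega
  rw [hsymm, hdouble]
  push_cast
  ring
end

section
/- For every even natural number n ≥ 2 one has C(n, n/2)² + 1 + ∑_{k=1}^{n/2 - 1} (n/2 - k) · C(n,k)² + (n/2 - 1) = (n/2 + 4) · C(n-1, n/2)²; equivalently, C(n,n/2)² + 1 + ∑_{d even, 2≤d≤n-2} (d/2) · C(n,(n-d)/2)² = (n/2 + 4)·C(n-1,n/2)² − (n/2 − 1). -/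
open Finset

private lemma key_sum (m : ℕ) (hm : 1 ≤ m) :
    ∀ j, j ≤ m → ∑ k ∈ Finset.range (j+1), (2*m - 2*k) * (Nat.choose (2*m) k)^2
      = (2*m - j) * Nat.choose (2*m) j * Nat.choose (2*m-1) j := by
  intro j
  induction j with
  | zero => intro _; simp
  | succ j ih =>
    intro hj
    rw [Finset.sum_range_succ, ih (by omega)]
    have h1 := Nat.choose_succ_right_eq (2*m) j
    have h2 := Nat.choose_succ_right_eq (2*m-1) j
    obtain ⟨p, hp⟩ : ∃ p, 2*m = p + 1 := ⟨2*m-1, by omega⟩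
    have hp' : 2*m - 1 = p := by omega
    have h3 : Nat.choose (2*m) (j+1) = Nat.choose (2*m-1) j + Nat.choose (2*m-1) (j+1) := by
      rw [hp', hp, Nat.choose_succ_succ]
    have h3' : ((Nat.choose (2*m) (j+1) : ℤ))
        = (Nat.choose (2*m-1) j : ℤ) + (Nat.choose (2*m-1) (j+1) : ℤ) := by
      exact_mod_cast congrArg (Nat.cast : ℕ → ℤ) h3
    zify [show j ≤ 2*m from by omega, show j ≤ 2*m - 1 from by omega,
      show 1 ≤ 2*m from by omega, show 2*(j+1) ≤ 2*m from by omega,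
      show j+1 ≤ 2*m from by omega] at h1 h2 ⊢
    linear_combination (-((Nat.choose (2*m-1) j : ℤ))) * h1
      + (-((Nat.choose (2*m) (j+1) : ℤ))) * h2
      + (2*(m:ℤ) - 2*(j:ℤ) - 2) * ((Nat.choose (2*m) (j+1) : ℤ)) * h3'

theorem stmt_4 (n : ℕ) (hn : 2 ≤ n) (heven : Even n) :
    (n.choose (n / 2)) ^ 2 + 1
        + (∑ k ∈ Finset.Icc 1 (n / 2 - 1), (n / 2 - k) * (n.choose k) ^ 2) + (n / 2 - 1)
      = (n / 2 + 4) * ((n - 1).choose (n / 2)) ^ 2 := by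
  obtain ⟨m, hm⟩ := heven
  have hm1 : 1 ≤ m := by omega
  have hn2 : n = 2 * m := by omega
  subst hn2
  have hdiv : 2 * m / 2 = m := by omega
  rw [hdiv]
  have hT := key_sum m hm1 m le_rfl
  have hpeel : ∑ k ∈ Finset.range (m+1), (2*m - 2*k) * (Nat.choose (2*m) k)^2
      = 2*m + ∑ k ∈ Finset.Icc 1 (m-1), (2*m - 2*k) * (Nat.choose (2*m) k)^2 := by
    rw [Finset.sum_range_succ, show (2*m - 2*m) * (Nat.choose (2*m) m)^2 = 0 by simp,
      add_zero, Finset.range_eq_Ico,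
      ← Finset.sum_Ico_consecutive _ (Nat.zero_le 1) hm1,
      show Finset.Ico 0 1 = {0} from rfl]
    have : Finset.Ico 1 m = Finset.Icc 1 (m-1) := by
      rw [show m = (m-1)+1 by omega, Finset.Ico_add_one_right_eq_Icc]
      congr 1
    rw [this]
    simp
  have hdouble : ∑ k ∈ Finset.Icc 1 (m-1), (2*m - 2*k) * (Nat.choose (2*m) k)^2
      = 2 * ∑ k ∈ Finset.Icc 1 (m-1), (m - k) * (Nat.choose (2*m) k)^2 := by
    rw [Finset.mul_sum]
    refine Finset.sum_congr rfl fun k hk => ?_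
    have hk' : k ≤ m - 1 := (Finset.mem_Icc.mp hk).2
    have : 2*m - 2*k = 2 * (m - k) := by omega
    rw [this, mul_assoc]
  -- C(2m, m) = 2 * C(2m-1, m)
  have hc : Nat.choose (2*m) m = 2 * Nat.choose (2*m-1) m := by
    obtain ⟨p, hp⟩ : ∃ p, 2*m = p + 1 := ⟨2*m-1, by omega⟩
    have hp' : 2*m - 1 = p := by omega
    rw [hp', hp, show m = (m-1)+1 by omega, Nat.choose_succ_succ]
    have hsym : Nat.choose p (m-1) = Nat.choose p ((m-1)+1) := by
      have : p - (m-1) = (m-1)+1 := by omega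
      rw [← Nat.choose_symm (by omega : m-1 ≤ p), this]
    simp only [Nat.succ_eq_add_one]
    omega
  set c := Nat.choose (2*m-1) m with hcdef
  set S := ∑ k ∈ Finset.Icc 1 (m-1), (m - k) * (Nat.choose (2*m) k)^2 with hSdef
  have hTm : 2*m - m = m := by omega
  rw [hTm, hc] at hT
  have hkey : 2*(m + S) = 2*(m * c * c) := by
    have h' : 2*m + 2*S = m * (2*c) * c := by rw [← hdouble, ← hpeel, hT]
    calc 2*(m+S) = 2*m + 2*S := by ring
    _ = m*(2*c)*c := h'
    _ = 2*(m*c*c) := by ring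
  have hkey2 : m + S = m * c * c := Nat.eq_of_mul_eq_mul_left (by norm_num) hkey
  rw [hc]
  zify [hm1]
  linear_combination (by exact_mod_cast congrArg (Nat.cast : ℕ → ℤ) hkey2 : (m:ℤ) + S = m*c*c)
end

section
/- For every even natural number n ≥ 2 one has 1 + ∑_{k=1}^{n/2 - 1} (n/2 - k) · C(n,k)² + (n/2 - 1) = (n/2) · C(n-1, n/2)²; equivalently, 1 + ∑_{d even, 2≤d≤n-2} (d/2) · C(n,(n-d)/2)² = (n/2)·C(n-1,n/2)² − (n/2 − 1). -/
lemma key_step_s5 (m j : ℕ) (hjm : j + 1 ≤ m) :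
    m * ((2*m-1).choose j)^2 + (m - (j+1)) * ((2*m).choose (j+1))^2
      = m * ((2*m-1).choose (j+1))^2 := by
  have hm : 1 ≤ m := le_trans (Nat.le_add_left 1 j) hjm
  have h2m : 2*m - 1 + 1 = 2*m := by omega
  have h1 := Nat.add_one_mul_choose_eq (2*m-1) j
  rw [h2m] at h1
  -- h1 : 2*m * (2*m-1).choose j = (2*m).choose (j+1) * (j+1)
  have hc : (2*m).choose (j+1) = (2*m-1).choose j + (2*m-1).choose (j+1) := by
    rw [← h2m]; exact Nat.choose_succ_succ' _ _
  set a := (2*m-1).choose j with ha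
  set b := (2*m-1).choose (j+1) with hb
  rw [hc] at h1 ⊢
  zify [hjm]
  have h1' : (2*(m:ℤ))*a = (a+b)*(j+1) := by exact_mod_cast h1
  linear_combination ((a:ℤ)+b) * h1'

lemma aux_sum (m : ℕ) (hm : 1 ≤ m) : ∀ j, j ≤ m - 1 →
    ∑ k ∈ Finset.range (j+1), (m - k) * ((2*m).choose k)^2
      = m * ((2*m-1).choose j)^2 := by
  intro j
  induction j with
  | zero => intro _; simp
  | succ j ih =>
      intro hj
      rw [Finset.sum_range_succ, ih (by omega)]
      exact key_step_s5 m j (by omega)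

theorem stmt_5 (n : ℕ) (hn : 2 ≤ n) (heven : Even n) :
    1 + (∑ k ∈ Finset.Icc 1 (n / 2 - 1), (n / 2 - k) * (n.choose k) ^ 2) + (n / 2 - 1)
      = (n / 2) * ((n - 1).choose (n / 2)) ^ 2 := by
  obtain ⟨m, rfl⟩ := heven
  have hm : 1 ≤ m := by omega
  have hn2 : (m + m) / 2 = m := by omega
  have h2m : m + m = 2 * m := by ring
  rw [hn2, h2m]
  have hsum := aux_sum m hm (m-1) le_rfl
  have hrange : Finset.range (m - 1 + 1) = Finset.Icc 0 (m-1) := by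
    rw [Finset.range_eq_Ico, Finset.Ico_add_one_right_eq_Icc]
  rw [hrange] at hsum
  have hins : Finset.Icc 0 (m-1) = insert 0 (Finset.Icc 1 (m-1)) := by
    ext x
    simp only [Finset.mem_Icc, Finset.mem_insert]
    omega
  rw [hins, Finset.sum_insert (by simp)] at hsum
  simp only [Nat.sub_zero, Nat.choose_zero_right, one_pow, mul_one] at hsum
  have hsymm : (2*m-1).choose (m-1) = (2*m-1).choose m := by
    rw [← Nat.choose_symm (show m ≤ 2*m-1 by omega)]
    congr 1
    omega
  rw [hsymm] at hsum
  omega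
end

section
/- For every even natural number n ≥ 4 one has 2 · ∑_{k=0}^{(n-4)/2} C(n-1,k) · C(n-1,k+1) + C(n-1, n/2)² = C(2n-2, n). -/
private lemma key_9 (p : ℕ) :
    2 * (∑ k ∈ Finset.range (p + 1), (2*p+3).choose k * (2*p+3).choose (k + 1))
        + ((2*p+3).choose (p + 2)) ^ 2
      = (4*p+6).choose (2*p+4) := by
  set g : ℕ → ℕ := fun k => (2*p+3).choose k * (2*p+3).choose (k + 1) with hg
  have stepA : (4*p+6).choose (2*p+4) = ∑ k ∈ Finset.range (2*p+3), g k := by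
    have h := Nat.add_choose_eq (2*p+3) (2*p+3) (2*p+4)
    rw [show (2*p+3) + (2*p+3) = 4*p+6 by ring] at h
    rw [h, Finset.Nat.sum_antidiagonal_eq_sum_range_succ_mk,
      Nat.succ_eq_add_one, Finset.sum_range_succ, Finset.sum_range_succ']
    simp only [Nat.choose_self, Nat.choose_zero_right]
    rw [Nat.choose_eq_zero_of_lt (by omega : 2*p+3 < 2*p+4)]
    simp only [Nat.mul_zero, Nat.zero_mul, Nat.add_zero, Nat.one_mul]
    rw [Nat.choose_eq_zero_of_lt (by omega : 2*p+3 < 2*p+4 - 0)]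
    rw [Nat.add_zero]
    apply Finset.sum_congr rfl
    intro i hi
    simp only [Finset.mem_range] at hi
    have h1 : 2*p+4 - (i+1) = (2*p+3) - i := by omega
    rw [h1, Nat.choose_symm (by omega : i ≤ 2*p+3), hg, mul_comm]
  have tail : ∑ i ∈ Finset.range (p+1), g (p+2+i) = ∑ i ∈ Finset.range (p+1), g i := by
    rw [← Finset.sum_range_reflect (fun i => g (p+2+i)) (p+1)]
    apply Finset.sum_congr rfl
    intro j hj
    simp only [Finset.mem_range] at hj
    rw [show p+2 + (p+1-1-j) = 2*p+2 - j by omega]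
    have h1 : (2*p+3).choose (2*p+2-j) = (2*p+3).choose (j+1) := by
      rw [show 2*p+2-j = 2*p+3 - (j+1) by omega, Nat.choose_symm (by omega)]
    have h2 : (2*p+3).choose (2*p+2-j+1) = (2*p+3).choose j := by
      rw [show 2*p+2-j+1 = 2*p+3 - j by omega, Nat.choose_symm (by omega)]
    simp only [hg]
    rw [h1, h2, mul_comm]
  have mid : g (p+1) = ((2*p+3).choose (p+2))^2 := by
    simp only [hg]
    rw [show p+1+1 = p+2 by rfl,
      show (2*p+3).choose (p+1) = (2*p+3).choose (p+2) by
        rw [show p+1 = 2*p+3 - (p+2) by omega, Nat.choose_symm (by omega)], sq]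
  have split : ∑ k ∈ Finset.range (2*p+3), g k
      = (∑ k ∈ Finset.range (p+1), g k)
        + ((∑ i ∈ Finset.range (p+1), g (p+2+i)) + g (p+1)) := by
    have t2 : ∑ i ∈ Finset.range (p+2), g (p+1+i)
        = (∑ i ∈ Finset.range (p+1), g (p+1+(i+1))) + g (p+1+0) :=
      Finset.sum_range_succ' _ _
    rw [show 2*p+3 = (p+1)+(p+2) by ring, Finset.sum_range_add, t2]
    have : ∀ i, g (p+1+(i+1)) = g (p+2+i) := fun i => congrArg g (by ring)
    simp only [this, Nat.add_zero]
  rw [stepA, split, tail, mid]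
  simp only [hg]
  ring

theorem stmt_9 (n : ℕ) (hn : 4 ≤ n) (heven : Even n) :
    2 * (∑ k ∈ Finset.range ((n - 4) / 2 + 1), (n - 1).choose k * (n - 1).choose (k + 1))
        + ((n - 1).choose (n / 2)) ^ 2
      = (2 * n - 2).choose n := by
  obtain ⟨m, rfl⟩ := heven
  obtain ⟨p, rfl⟩ : ∃ p, m = p + 2 := ⟨m - 2, by omega⟩
  rw [show ((p+2)+(p+2)-4)/2+1 = p+1 by omega,
    show (p+2)+(p+2)-1 = 2*p+3 by omega,
    show ((p+2)+(p+2))/2 = p+2 by omega,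
    show 2*((p+2)+(p+2))-2 = 4*p+6 by omega,
    show (p+2)+(p+2) = 2*p+4 by omega]
  exact key_9 p
end

section
/- Let m ≥ 1 be an integer and let r, a be nonzero complex numbers with a² ≠ 1. Set c = r^m and y_s = r · exp(2πi s/m) for s = 0, 1, …, m−1, and assume a^m ≠ c and a^{-m} ≠ c. Then for every integer ℓ with 0 ≤ ℓ ≤ m, (1/m) · ∑_{s=0}^{m-1} y_s^ℓ / (y_s + y_s^{-1} − a − a^{-1}) = −(1/(a − a^{-1})) · ( a^ℓ/(c^{-1} a^m − 1) − a^{-ℓ}/(c^{-1} a^{-m} − 1) ). -/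
open Complex
open Complex Finset

lemma aux_sum_pow (m : ℕ) (hm : 1 ≤ m) (r : ℂ) (y : ℕ → ℂ)
    (hy : ∀ s, y s = r * Complex.exp (2 * Real.pi * Complex.I * s / m))
    (k : ℕ) (hk : k ≤ m) :
    ∑ s ∈ Finset.range m, (y s) ^ k
      = if k = 0 then (m : ℂ) else if k = m then (m : ℂ) * r ^ m else 0 := by
  have hm0 : (m : ℂ) ≠ 0 := Nat.cast_ne_zero.mpr (by omega)
  set ω : ℂ := Complex.exp (2 * Real.pi * Complex.I / m) with hω
  have hyω : ∀ s : ℕ, y s = r * ω ^ s := by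
    intro s
    rw [hy, hω, ← Complex.exp_nat_mul]
    congr 1
    ring
  have hωm : ω ^ m = 1 := by
    rw [hω, ← Complex.exp_nat_mul]
    have : (m : ℂ) * (2 * Real.pi * Complex.I / m) = 2 * Real.pi * Complex.I := by
      field_simp
    rw [this, Complex.exp_two_pi_mul_I]
  have key : ∑ s ∈ Finset.range m, (y s) ^ k = r ^ k * ∑ s ∈ Finset.range m, (ω ^ k) ^ s := by
    rw [Finset.mul_sum]
    refine Finset.sum_congr rfl fun s _ => ?_
    rw [hyω s, mul_pow, ← pow_mul, ← pow_mul, Nat.mul_comm]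
  rcases Nat.eq_zero_or_pos k with rfl | hkpos
  · simp
  · have hkne0 : k ≠ 0 := by omega
    rcases eq_or_lt_of_le hk with rfl | hklt
    · simp only [hkne0, if_false, if_pos rfl]
      rw [key]
      simp [hωm, mul_comm]
    · have hkm : k ≠ m := by omega
      simp only [hkne0, hkm, if_false]
      have hne : ω ^ k ≠ 1 := by
        intro h
        rw [hω, ← Complex.exp_nat_mul] at h
        obtain ⟨z, hz⟩ := Complex.exp_eq_one_iff.mp h
        have h2pi : (2 : ℂ) * Real.pi * Complex.I ≠ 0 := by
          simp [Real.pi_ne_zero, Complex.I_ne_zero]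
        have hzc : (k : ℂ) = (z : ℂ) * m := by
          have h' : (k:ℂ) * (2 * Real.pi * Complex.I) = ((z:ℂ) * m) * (2 * Real.pi * Complex.I) := by
            field_simp at hz
            linear_combination (2 * Real.pi * Complex.I) * hz
          exact mul_right_cancel₀ h2pi h'
        have hzk : (k : ℤ) = z * m := by exact_mod_cast hzc
        have hdvd : (m : ℤ) ∣ (k : ℤ) := ⟨z, by rw [hzk]; ring⟩
        have hdvd' : m ∣ k := Int.natCast_dvd_natCast.mp hdvd
        have := Nat.le_of_dvd hkpos hdvd'
        omega
      rw [key, geom_sum_eq hne m]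
      have h1 : (ω ^ k) ^ m = 1 := by rw [← pow_mul, Nat.mul_comm, pow_mul, hωm, one_pow]
      rw [h1]
      simp
open Complex Finset

lemma aux_P (m : ℕ) (hm : 1 ≤ m) (c : ℂ) (y : ℕ → ℂ)
    (hS : ∀ k, k ≤ m → ∑ s ∈ Finset.range m, (y s) ^ k
      = if k = 0 then (m : ℂ) else if k = m then (m : ℂ) * c else 0)
    (ℓ : ℕ) (hℓ : ℓ ≤ m) (x : ℂ) :
    ∑ s ∈ Finset.range m, ∑ j ∈ Finset.range (ℓ+1), x ^ j * (y s) ^ (ℓ - j)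
      = (m : ℂ) * x ^ ℓ + (if ℓ = m then (m : ℂ) * c else 0) := by
  rw [Finset.sum_comm]
  have step : ∀ j ∈ Finset.range (ℓ+1),
      ∑ s ∈ Finset.range m, x ^ j * (y s) ^ (ℓ - j)
        = x ^ j * (if ℓ - j = 0 then (m : ℂ) else if ℓ - j = m then (m : ℂ) * c else 0) := by
    intro j hj
    rw [← Finset.mul_sum, hS (ℓ - j) (by omega)]
  rw [Finset.sum_congr rfl step]
  rcases eq_or_lt_of_le hℓ with rfl | hlt
  · simp only [if_pos rfl]
    rw [Finset.sum_range_succ]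
    have hrest : ∑ j ∈ Finset.range ℓ, x ^ j *
        (if ℓ - j = 0 then (ℓ : ℂ) else if ℓ - j = ℓ then (ℓ : ℂ) * c else 0) = (ℓ : ℂ) * c := by
      rw [Finset.sum_eq_single_of_mem 0 (Finset.mem_range.mpr (by omega))]
      · have e1 : ℓ ≠ 0 := by omega
        simp [e1]
      · intro j hj hj0
        have hjlt := Finset.mem_range.mp hj
        have e1 : ℓ - j ≠ 0 := by omega
        have e2 : ℓ - j ≠ ℓ := by omega
        simp [e1, e2]
    rw [hrest]
    simp [Nat.sub_self]
    ring
  · have hne : ℓ ≠ m := by omega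
    simp only [hne, if_false]
    rw [Finset.sum_eq_single_of_mem ℓ (Finset.mem_range.mpr (by omega))]
    · simp [Nat.sub_self, mul_comm]
    · intro j hj hj0
      have hjlt := Finset.mem_range.mp hj
      have e1 : ℓ - j ≠ 0 := by omega
      have e2 : ℓ - j ≠ m := by omega
      simp [e1, e2]

lemma aux_Q (m : ℕ) (hm : 1 ≤ m) (c : ℂ) (y : ℕ → ℂ)
    (hS : ∀ k, k ≤ m → ∑ s ∈ Finset.range m, (y s) ^ k
      = if k = 0 then (m : ℂ) else if k = m then (m : ℂ) * c else 0)
    (x : ℂ) :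
    ∑ s ∈ Finset.range m, ∑ j ∈ Finset.range m, x ^ j * (y s) ^ (m - 1 - j)
      = (m : ℂ) * x ^ (m - 1) := by
  rw [Finset.sum_comm]
  have step : ∀ j ∈ Finset.range m,
      ∑ s ∈ Finset.range m, x ^ j * (y s) ^ (m - 1 - j)
        = x ^ j * (if m - 1 - j = 0 then (m : ℂ) else if m - 1 - j = m then (m : ℂ) * c else 0) := by
    intro j hj
    rw [← Finset.mul_sum, hS (m - 1 - j) (by omega)]
  rw [Finset.sum_congr rfl step]
  rw [Finset.sum_eq_single_of_mem (m - 1) (Finset.mem_range.mpr (by omega))]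
  · simp [Nat.sub_self, mul_comm]
  · intro j hj hj0
    have hjlt := Finset.mem_range.mp hj
    have e1 : m - 1 - j ≠ 0 := by omega
    have e2 : m - 1 - j ≠ m := by omega
    simp [e1, e2]

theorem stmt_13 (m : ℕ) (hm : 1 ≤ m) (r a : ℂ) (hr : r ≠ 0) (ha : a ≠ 0)
    (ha2 : a ^ 2 ≠ 1) (c : ℂ) (hc : c = r ^ m)
    (y : ℕ → ℂ) (hy : ∀ s, y s = r * Complex.exp (2 * Real.pi * Complex.I * s / m))
    (h1 : a ^ m ≠ c) (h2 : a⁻¹ ^ m ≠ c)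
    (ℓ : ℕ) (hℓ : ℓ ≤ m) :
    (1 / (m : ℂ)) * ∑ s ∈ Finset.range m, (y s) ^ ℓ / (y s + (y s)⁻¹ - a - a⁻¹)
      = -(1 / (a - a⁻¹)) *
          (a ^ ℓ / (c⁻¹ * a ^ m - 1) - a⁻¹ ^ ℓ / (c⁻¹ * a⁻¹ ^ m - 1)) := by
  obtain ⟨n, rfl⟩ := Nat.exists_eq_succ_of_ne_zero (show m ≠ 0 by omega)
  obtain ⟨b, hbdef⟩ : ∃ x : ℂ, x = a⁻¹ := ⟨a⁻¹, rfl⟩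
  rw [← hbdef] at h2 ⊢
  have hb : b ≠ 0 := by rw [hbdef]; exact inv_ne_zero ha
  have hab : a * b = 1 := by rw [hbdef]; exact mul_inv_cancel₀ ha
  have hA : a - b ≠ 0 := by
    intro h
    rw [sub_eq_zero] at h
    apply ha2
    rw [sq]
    nth_rw 2 [h]
    exact hab
  have hm0 : ((n + 1 : ℕ) : ℂ) ≠ 0 := Nat.cast_ne_zero.mpr (by omega)
  have hm0' : (n : ℂ) + 1 ≠ 0 := by exact_mod_cast hm0
  have hm0'' : (1 : ℂ) + (n : ℂ) ≠ 0 := by rw [add_comm]; exact hm0'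
  have hc0 : c ≠ 0 := by rw [hc]; exact pow_ne_zero _ hr
  have hca : c - a ^ (n + 1) ≠ 0 := sub_ne_zero.mpr (Ne.symm h1)
  have hcb : c - b ^ (n + 1) ≠ 0 := sub_ne_zero.mpr (Ne.symm h2)
  have hS : ∀ k, k ≤ n + 1 → ∑ s ∈ Finset.range (n + 1), (y s) ^ k
      = if k = 0 then ((n + 1 : ℕ) : ℂ) else if k = n + 1 then ((n + 1 : ℕ) : ℂ) * c else 0 := by
    intro k hk
    rw [aux_sum_pow (n + 1) (by omega) r y hy k hk, ← hc]
  have hy0 : ∀ s : ℕ, y s ≠ 0 := fun s => by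
    rw [hy]; exact mul_ne_zero hr (Complex.exp_ne_zero _)
  have hym : ∀ s : ℕ, (y s) ^ (n + 1) = c := by
    intro s
    rw [hy, mul_pow, ← Complex.exp_nat_mul]
    have e : ((n + 1 : ℕ) : ℂ) * (2 * Real.pi * Complex.I * s / (n + 1 : ℕ))
        = (s : ℂ) * (2 * Real.pi * Complex.I) := by
      push_cast
      field_simp
    rw [e, Complex.exp_nat_mul, Complex.exp_two_pi_mul_I, one_pow, mul_one, ← hc]
  have hya : ∀ s : ℕ, y s - a ≠ 0 := by
    intro s h
    rw [sub_eq_zero] at h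
    exact h1 (by rw [← h, hym s])
  have hyb : ∀ s : ℕ, y s - b ≠ 0 := by
    intro s h
    rw [sub_eq_zero] at h
    exact h2 (by rw [← h, hym s])
  -- pointwise identity
  have key : ∀ s : ℕ, (y s) ^ ℓ / (y s + (y s)⁻¹ - a - b)
      = (1 / (a - b)) *
        (((∑ j ∈ Finset.range (ℓ + 1), a ^ j * (y s) ^ (ℓ - j))
            + a ^ (ℓ + 1) * ((∑ j ∈ Finset.range (n + 1), a ^ j * (y s) ^ (n - j)) / (c - a ^ (n + 1))))
          - ((∑ j ∈ Finset.range (ℓ + 1), b ^ j * (y s) ^ (ℓ - j))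
            + b ^ (ℓ + 1) * ((∑ j ∈ Finset.range (n + 1), b ^ j * (y s) ^ (n - j)) / (c - b ^ (n + 1))))) := by
    intro s
    set Y := y s with hY
    have hY0 : Y ≠ 0 := hy0 s
    have hYa : Y - a ≠ 0 := hya s
    have hYb : Y - b ≠ 0 := hyb s
    have hYc : Y ^ (n + 1) = c := hym s
    have hYi : Y * Y⁻¹ = 1 := mul_inv_cancel₀ hY0
    have hfac : Y * (Y + Y⁻¹ - a - b) = (Y - a) * (Y - b) := by
      linear_combination hYi - hab
    have hden : Y + Y⁻¹ - a - b ≠ 0 := by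
      intro h
      exact (mul_ne_zero hYa hYb) (by rw [← hfac, h, mul_zero])
    have hPa := geom_sum₂_mul a Y (ℓ + 1)
    have hPb := geom_sum₂_mul b Y (ℓ + 1)
    have hQa := geom_sum₂_mul a Y (n + 1)
    have hQb := geom_sum₂_mul b Y (n + 1)
    simp only [Nat.add_sub_cancel] at hPa hPb hQa hQb
    have e2 : Y ^ ℓ / (Y + Y⁻¹ - a - b) = Y ^ (ℓ + 1) / ((Y - a) * (Y - b)) := by
      rw [div_eq_div_iff hden (mul_ne_zero hYa hYb)]
      linear_combination (-(Y ^ ℓ)) * hfac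
    have hQa' : (∑ j ∈ Finset.range (n + 1), a ^ j * Y ^ (n - j)) / (c - a ^ (n + 1))
        = 1 / (Y - a) := by
      rw [div_eq_div_iff hca hYa]
      linear_combination (-1 : ℂ) * hQa + hYc
    have hQb' : (∑ j ∈ Finset.range (n + 1), b ^ j * Y ^ (n - j)) / (c - b ^ (n + 1))
        = 1 / (Y - b) := by
      rw [div_eq_div_iff hcb hYb]
      linear_combination (-1 : ℂ) * hQb + hYc
    have hBa : Y ^ (ℓ + 1) / (Y - a)
        = (∑ j ∈ Finset.range (ℓ + 1), a ^ j * Y ^ (ℓ - j)) + a ^ (ℓ + 1) * (1 / (Y - a)) := by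
      field_simp
      linear_combination hPa
    have hBb : Y ^ (ℓ + 1) / (Y - b)
        = (∑ j ∈ Finset.range (ℓ + 1), b ^ j * Y ^ (ℓ - j)) + b ^ (ℓ + 1) * (1 / (Y - b)) := by
      field_simp
      linear_combination hPb
    have stepD : Y ^ (ℓ + 1) / ((Y - a) * (Y - b))
        = (1 / (a - b)) * (Y ^ (ℓ + 1) / (Y - a) - Y ^ (ℓ + 1) / (Y - b)) := by
      field_simp
      ring
    rw [e2, hQa', hQb', ← hBa, ← hBb]
    exact stepD
  rw [Finset.sum_congr rfl (fun s _ => key s)]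
  -- evaluate the sums
  have SA := aux_P (n + 1) (by omega) c y hS ℓ hℓ a
  have SB := aux_P (n + 1) (by omega) c y hS ℓ hℓ b
  have SQA := aux_Q (n + 1) (by omega) c y hS a
  have SQB := aux_Q (n + 1) (by omega) c y hS b
  simp only [Nat.add_sub_cancel] at SQA SQB
  rw [← Finset.mul_sum, Finset.sum_sub_distrib, Finset.sum_add_distrib, Finset.sum_add_distrib]
  simp only [← Finset.mul_sum, ← Finset.sum_div]
  rw [SA, SB, SQA, SQB]
  -- final algebra
  have hne1 : c⁻¹ * a ^ (n + 1) - 1 ≠ 0 := by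
    intro h
    rw [sub_eq_zero] at h
    apply h1
    field_simp [hc0] at h
    exact h
  have hne2 : c⁻¹ * b ^ (n + 1) - 1 ≠ 0 := by
    intro h
    rw [sub_eq_zero] at h
    apply h2
    field_simp [hc0] at h
    exact h
  have hci : c * c⁻¹ = 1 := mul_inv_cancel₀ hc0
  have ea : a ^ ℓ / (c⁻¹ * a ^ (n + 1) - 1) = -(a ^ ℓ * c) / (c - a ^ (n + 1)) := by
    rw [div_eq_div_iff hne1 hca]
    linear_combination (a ^ ℓ * a ^ (n + 1)) * hci
  have eb : b ^ ℓ / (c⁻¹ * b ^ (n + 1) - 1) = -(b ^ ℓ * c) / (c - b ^ (n + 1)) := by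
    rw [div_eq_div_iff hne2 hcb]
    linear_combination (b ^ ℓ * b ^ (n + 1)) * hci
  rw [ea, eb]
  field_simp
  ring
end

section
/- Let m ≥ 1 be an integer and let r, a be nonzero complex numbers with a² ≠ 1. Set c = r^m and y_s = r · exp(2πi s/m) for s = 0, 1, …, m−1, and assume a^m ≠ c and a^{-m} ≠ c. Then for every integer ℓ with 0 ≤ ℓ ≤ m, (1/m) · ∑_{s=0}^{m-1} y_s^{-ℓ} / (y_s + y_s^{-1} − a − a^{-1}) = −(1/(a − a^{-1})) · ( a^ℓ/(c a^m − 1) − a^{-ℓ}/(c a^{-m} − 1) ). -/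
open Complex

set_option maxHeartbeats 1000000 in
theorem stmt_14 (m : ℕ) (hm : 1 ≤ m) (r a : ℂ) (hr : r ≠ 0) (ha : a ≠ 0)
    (ha2 : a ^ 2 ≠ 1) (c : ℂ) (hc : c = r ^ m)
    (y : ℕ → ℂ) (hy : ∀ s, y s = r * Complex.exp (2 * Real.pi * Complex.I * s / m))
    (h1 : a ^ m ≠ c) (h2 : a⁻¹ ^ m ≠ c)
    (ℓ : ℕ) (hℓ : ℓ ≤ m) :
    (1 / (m : ℂ)) * ∑ s ∈ Finset.range m, (y s)⁻¹ ^ ℓ / (y s + (y s)⁻¹ - a - a⁻¹)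
      = -(1 / (a - a⁻¹)) *
          (a ^ ℓ / (c * a ^ m - 1) - a⁻¹ ^ ℓ / (c * a⁻¹ ^ m - 1)) := by
  have hm0 : (m : ℂ) ≠ 0 := Nat.cast_ne_zero.mpr (by omega)
  have hc0 : c ≠ 0 := by rw [hc]; exact pow_ne_zero _ hr
  have haa : a - a⁻¹ ≠ 0 := by
    intro h
    apply ha2
    have : (a - a⁻¹) * a = a^2 - 1 := by field_simp
    rw [h, zero_mul] at this
    linear_combination -this
  have hca : c - a ^ m ≠ 0 := sub_ne_zero.mpr (Ne.symm h1)
  have hca' : c - a⁻¹ ^ m ≠ 0 := sub_ne_zero.mpr (Ne.symm h2)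
  have ha2' : a ^ 2 - 1 ≠ 0 := sub_ne_zero.mpr ha2
  have hpam : a ^ m ≠ 0 := pow_ne_zero m ha
  have hcam : c * a ^ m - 1 ≠ 0 := by
    have h : c * a ^ m - 1 = (c - a⁻¹ ^ m) * a ^ m := by
      rw [inv_pow, sub_mul, inv_mul_cancel₀ hpam]
    rw [h]
    exact mul_ne_zero hca' hpam
  have hcam' : a ^ m * c - 1 ≠ 0 := by rw [mul_comm]; exact hcam
  have hcam2 : c * a⁻¹ ^ m - 1 ≠ 0 := by
    have h : c * a⁻¹ ^ m - 1 = (c - a ^ m) * a⁻¹ ^ m := by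
      rw [inv_pow, sub_mul, mul_inv_cancel₀ hpam]
    rw [h]
    exact mul_ne_zero hca (pow_ne_zero m (inv_ne_zero ha))
  -- roots
  set ζ : ℂ := Complex.exp (2 * Real.pi * Complex.I / m) with hζ
  have hprim : IsPrimitiveRoot ζ m := Complex.isPrimitiveRoot_exp m (by omega)
  have hyz : ∀ s : ℕ, y s = r * ζ ^ s := by
    intro s
    rw [hy s, hζ, ← Complex.exp_nat_mul]
    ring_nf
  have hy0 : ∀ s : ℕ, y s ≠ 0 := by
    intro s
    rw [hyz s]
    exact mul_ne_zero hr (pow_ne_zero _ (Complex.exp_ne_zero _))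
  have hym : ∀ s : ℕ, (y s) ^ m = c := by
    intro s
    rw [hyz s, mul_pow, ← pow_right_comm, hprim.pow_eq_one, one_pow, mul_one, hc]
  -- sum of powers of roots
  have hsum : ∀ N : ℕ, ∑ s ∈ Finset.range m, (y s) ^ N
      = if m ∣ N then (m : ℂ) * r ^ N else 0 := by
    intro N
    have : ∀ s, (y s) ^ N = r ^ N * (ζ ^ N) ^ s := by
      intro s; rw [hyz s, mul_pow, pow_right_comm]
    simp only [this, ← Finset.mul_sum]
    by_cases hd : m ∣ N
    · rw [(hprim.pow_eq_one_iff_dvd N).mpr hd, if_pos hd]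
      simp [mul_comm]
    · rw [if_neg hd, geom_sum_eq (fun h => hd ((hprim.pow_eq_one_iff_dvd N).mp h)) m,
        ← pow_mul, mul_comm N m, pow_mul, hprim.pow_eq_one, one_pow]
      simp
  -- coefficients
  set A : ℂ := a / ((a - a⁻¹) * (c - a ^ m)) with hA
  set B : ℂ := a⁻¹ / ((a - a⁻¹) * (c - a⁻¹ ^ m)) with hB
  -- pointwise expansion
  have step1 : ∀ s : ℕ, (y s)⁻¹ ^ ℓ / (y s + (y s)⁻¹ - a - a⁻¹)
      = ∑ j ∈ Finset.range m,
          (A * a ^ (m - 1 - j) - B * a⁻¹ ^ (m - 1 - j)) * c⁻¹ ^ ℓ * (y s) ^ (ℓ * (m - 1) + j) := by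
    intro s
    have hY0 : y s ≠ 0 := hy0 s
    have hYm : (y s) ^ m = c := hym s
    have hYa : y s - a ≠ 0 := sub_ne_zero.mpr (fun h => h1 (by rw [← h]; exact hYm))
    have hYa' : y s - a⁻¹ ≠ 0 := sub_ne_zero.mpr (fun h => h2 (by rw [← h]; exact hYm))
    have hD : y s + (y s)⁻¹ - a - a⁻¹ = (y s - a) * (y s - a⁻¹) / y s := by
      field_simp
      try ring
    have hS1 : (∑ j ∈ Finset.range m, (y s) ^ j * a ^ (m - 1 - j)) = (c - a ^ m) / (y s - a) := by
      rw [eq_div_iff hYa, geom_sum₂_mul, hYm]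
    have hS2 : (∑ j ∈ Finset.range m, (y s) ^ j * a⁻¹ ^ (m - 1 - j)) = (c - a⁻¹ ^ m) / (y s - a⁻¹) := by
      rw [eq_div_iff hYa', geom_sum₂_mul, hYm]
    have hYe : (y s) ^ (ℓ * (m - 1)) = c ^ ℓ / (y s) ^ ℓ := by
      rw [eq_div_iff (pow_ne_zero _ hY0), ← pow_add,
        show ℓ * (m - 1) + ℓ = m * ℓ from by
          have h1 : ℓ * (m-1) = ℓ*m - ℓ*1 := by rw [Nat.mul_sub]
          have h2' : ℓ ≤ ℓ*m := Nat.le_mul_of_pos_right ℓ (by omega)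
          have h3 : ℓ * m = m * ℓ := mul_comm ℓ m
          omega,
        pow_mul, hYm]
    calc (y s)⁻¹ ^ ℓ / (y s + (y s)⁻¹ - a - a⁻¹)
        = (c⁻¹ ^ ℓ * (y s) ^ (ℓ * (m - 1))) *
            (A * ((∑ j ∈ Finset.range m, (y s) ^ j * a ^ (m - 1 - j)))
              - B * ((∑ j ∈ Finset.range m, (y s) ^ j * a⁻¹ ^ (m - 1 - j)))) := by
          rw [hD, hS1, hS2, hYe, hA, hB]
          have hA1 : a / ((a - a⁻¹) * (c - a ^ m)) * ((c - a ^ m) / (y s - a))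
              = a / ((a - a⁻¹) * (y s - a)) := by
            rw [div_mul_div_comm,
              show (a - a⁻¹) * (c - a ^ m) * (y s - a)
                = (a - a⁻¹) * (y s - a) * (c - a ^ m) from by ring]
            exact mul_div_mul_right _ _ hca
          have hB1 : a⁻¹ / ((a - a⁻¹) * (c - a⁻¹ ^ m)) * ((c - a⁻¹ ^ m) / (y s - a⁻¹))
              = a⁻¹ / ((a - a⁻¹) * (y s - a⁻¹)) := by
            rw [div_mul_div_comm,
              show (a - a⁻¹) * (c - a⁻¹ ^ m) * (y s - a⁻¹)
                = (a - a⁻¹) * (y s - a⁻¹) * (c - a⁻¹ ^ m) from by ring]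
            exact mul_div_mul_right _ _ hca'
          rw [hA1, hB1]
          simp only [inv_pow]
          rw [show (c ^ ℓ)⁻¹ * (c ^ ℓ / y s ^ ℓ) = (y s ^ ℓ)⁻¹ from by
              rw [← mul_div_assoc, inv_mul_cancel₀ (pow_ne_zero ℓ hc0), one_div],
            div_sub_div _ _ (mul_ne_zero haa hYa) (mul_ne_zero haa hYa'),
            div_eq_mul_inv ((y s ^ ℓ)⁻¹), inv_div]
          congr 1
          rw [show a * ((a - a⁻¹) * (y s - a⁻¹)) - (a - a⁻¹) * (y s - a) * a⁻¹
              = y s * ((a - a⁻¹) * (a - a⁻¹)) from by field_simp; ring,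
            show (a - a⁻¹) * (y s - a) * ((a - a⁻¹) * (y s - a⁻¹))
              = (y s - a) * (y s - a⁻¹) * ((a - a⁻¹) * (a - a⁻¹)) from by ring]
          exact (mul_div_mul_right _ _ (mul_ne_zero haa haa)).symm
      _ = ∑ j ∈ Finset.range m,
          (A * a ^ (m - 1 - j) - B * a⁻¹ ^ (m - 1 - j)) * c⁻¹ ^ ℓ * (y s) ^ (ℓ * (m - 1) + j) := by
          simp only [mul_sub, Finset.mul_sum, ← Finset.sum_sub_distrib]
          refine Finset.sum_congr rfl fun j _ => ?_
          rw [pow_add]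
          ring
  rw [Finset.sum_congr rfl (fun s _ => step1 s), Finset.sum_comm]
  simp only [← Finset.mul_sum, hsum]
  have hR1 : (1 : ℂ) / (a - a⁻¹) = a / (a ^ 2 - 1) := by
    rw [div_eq_div_iff haa ha2']
    field_simp
  rcases eq_or_lt_of_le hℓ with hcase | hcase
  · -- ℓ = m
    subst hcase
    have key2 : ∀ x ∈ Finset.range ℓ,
        (A * a ^ (ℓ - 1 - x) - B * a⁻¹ ^ (ℓ - 1 - x)) * c⁻¹ ^ ℓ *
          (if ℓ ∣ ℓ * (ℓ - 1) + x then (ℓ : ℂ) * r ^ (ℓ * (ℓ - 1) + x) else 0)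
        = if x = 0 then (A * a ^ (ℓ - 1 - 0) - B * a⁻¹ ^ (ℓ - 1 - 0)) * c⁻¹ ^ ℓ *
            ((ℓ : ℂ) * r ^ (ℓ * (ℓ - 1) + 0)) else 0 := by
      intro x hx
      rcases eq_or_ne x 0 with h | h
      · subst h
        rw [if_pos rfl, if_pos ((Nat.dvd_add_right (dvd_mul_right ℓ (ℓ - 1))).mpr (dvd_zero ℓ))]
      · rw [if_neg h, if_neg, mul_zero]
        intro hd
        exact h (Nat.eq_zero_of_dvd_of_lt ((Nat.dvd_add_right (dvd_mul_right ℓ (ℓ - 1))).mp hd)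
          (Finset.mem_range.mp hx))
    rw [Finset.sum_congr rfl key2, Finset.sum_ite_eq' (Finset.range ℓ) 0,
      if_pos (Finset.mem_range.mpr (by omega)), add_zero, Nat.sub_zero, pow_mul, ← hc]
    obtain ⟨k, hk⟩ : ∃ k, ℓ = k + 1 := ⟨ℓ - 1, by omega⟩
    subst hk
    simp only [Nat.add_sub_cancel]
    have hk1 : ((k : ℂ) + 1) ≠ 0 := by
      have : ((k+1 : ℕ) : ℂ) ≠ 0 := Nat.cast_ne_zero.mpr (by omega)
      push_cast at this
      exact this
    have hcc : c⁻¹ ^ (k + 1) * c ^ k = c⁻¹ := by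
      rw [pow_succ, mul_comm (c⁻¹ ^ k) c⁻¹, mul_assoc, ← mul_pow, inv_mul_cancel₀ hc0,
        one_pow, mul_one]
    push_cast
    rw [show 1 / ((k : ℂ) + 1) * ((A * a ^ k - B * a⁻¹ ^ k) * c⁻¹ ^ (k + 1) * (((k : ℂ) + 1) * c ^ k))
        = (((k : ℂ) + 1) / ((k : ℂ) + 1)) * ((A * a ^ k - B * a⁻¹ ^ k) * (c⁻¹ ^ (k + 1) * c ^ k))
        from by ring, hcc, div_self hk1, one_mul, hA, hB]
    have hA3 : a / ((a - a⁻¹) * (c - a ^ (k + 1))) * a ^ k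
        = a ^ (k + 2) / ((a ^ 2 - 1) * (c - a ^ (k + 1))) := by
      rw [div_mul_eq_mul_div, div_eq_div_iff (mul_ne_zero haa hca) (mul_ne_zero ha2' hca)]
      field_simp
      try ring
    have hB3 : a⁻¹ / ((a - a⁻¹) * (c - a⁻¹ ^ (k + 1))) * a⁻¹ ^ k
        = a / ((a ^ 2 - 1) * (c * a ^ (k + 1) - 1)) := by
      rw [div_mul_eq_mul_div, div_eq_div_iff (mul_ne_zero haa hca') (mul_ne_zero ha2' hcam)]
      field_simp
      simp only [one_div_pow]; field_simp; ring
    have hR2 : a⁻¹ ^ (k + 1) / (c * a⁻¹ ^ (k + 1) - 1) = 1 / (c - a ^ (k + 1)) := by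
      rw [div_eq_div_iff hcam2 hca]
      field_simp
      simp only [one_div_pow]; field_simp
    rw [hA3, hB3, hR1, hR2]
    field_simp [ha2', hca, hcam]
    ring
  · -- ℓ < m
    have e : ℓ * (m - 1) + ℓ = ℓ * m := by
      have e1 : ℓ * (m - 1) = ℓ * m - ℓ * 1 := by rw [Nat.mul_sub]
      have e2 : ℓ ≤ ℓ * m := Nat.le_mul_of_pos_right ℓ (by omega)
      omega
    have hdl : m ∣ ℓ * (m - 1) + ℓ := e ▸ dvd_mul_left m ℓ
    have key : ∀ j ∈ Finset.range m,
        (A * a ^ (m - 1 - j) - B * a⁻¹ ^ (m - 1 - j)) * c⁻¹ ^ ℓ *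
          (if m ∣ ℓ * (m - 1) + j then (m : ℂ) * r ^ (ℓ * (m - 1) + j) else 0)
        = if j = ℓ then (A * a ^ (m - 1 - ℓ) - B * a⁻¹ ^ (m - 1 - ℓ)) * c⁻¹ ^ ℓ *
            ((m : ℂ) * r ^ (ℓ * (m - 1) + ℓ)) else 0 := by
      intro j hj
      rcases eq_or_ne j ℓ with h | h
      · subst h
        rw [if_pos rfl, if_pos hdl]
      · rw [if_neg h, if_neg, mul_zero]
        intro hd
        rcases Nat.lt_or_ge j ℓ with hlt | hge
        · have d := Nat.dvd_sub hdl hd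
          rw [show ℓ * (m - 1) + ℓ - (ℓ * (m - 1) + j) = ℓ - j from by omega] at d
          have := Nat.le_of_dvd (by omega) d
          omega
        · have d := Nat.dvd_sub hd hdl
          rw [show ℓ * (m - 1) + j - (ℓ * (m - 1) + ℓ) = j - ℓ from by omega] at d
          have := Nat.le_of_dvd (by omega) d
          have hjm := Finset.mem_range.mp hj
          omega
    rw [Finset.sum_congr rfl key, Finset.sum_ite_eq' (Finset.range m) ℓ,
      if_pos (Finset.mem_range.mpr hcase), e, mul_comm ℓ m, pow_mul, ← hc]
    obtain ⟨k, hk⟩ : ∃ k, m = ℓ + k + 1 := ⟨m - ℓ - 1, by omega⟩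
    subst hk
    rw [show ℓ + k + 1 - 1 - ℓ = k from by omega]
    have hccl : c⁻¹ ^ ℓ * c ^ ℓ = 1 := by
      rw [← mul_pow, inv_mul_cancel₀ hc0, one_pow]
    rw [show 1 / ((ℓ + k + 1 : ℕ) : ℂ) *
          ((A * a ^ k - B * a⁻¹ ^ k) * c⁻¹ ^ ℓ * (((ℓ + k + 1 : ℕ) : ℂ) * c ^ ℓ))
        = (((ℓ + k + 1 : ℕ) : ℂ) / ((ℓ + k + 1 : ℕ) : ℂ)) *
          ((A * a ^ k - B * a⁻¹ ^ k) * (c⁻¹ ^ ℓ * c ^ ℓ)) from by ring,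
      hccl, div_self hm0, one_mul, mul_one, hA, hB]
    have hA3 : a / ((a - a⁻¹) * (c - a ^ (ℓ + k + 1))) * a ^ k
        = a ^ (k + 2) / ((a ^ 2 - 1) * (c - a ^ (ℓ + k + 1))) := by
      rw [div_mul_eq_mul_div, div_eq_div_iff (mul_ne_zero haa hca) (mul_ne_zero ha2' hca)]
      field_simp
      try ring
    have hB3 : a⁻¹ / ((a - a⁻¹) * (c - a⁻¹ ^ (ℓ + k + 1))) * a⁻¹ ^ k
        = a ^ (ℓ + 1) / ((a ^ 2 - 1) * (c * a ^ (ℓ + k + 1) - 1)) := by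
      rw [div_mul_eq_mul_div, div_eq_div_iff (mul_ne_zero haa hca') (mul_ne_zero ha2' hcam)]
      field_simp
      simp only [one_div_pow]; field_simp; ring
    have hR2 : a⁻¹ ^ ℓ / (c * a⁻¹ ^ (ℓ + k + 1) - 1) = a ^ (k + 1) / (c - a ^ (ℓ + k + 1)) := by
      rw [div_eq_div_iff hcam2 hca]
      field_simp
      simp only [one_div_pow]; field_simp; ring
    rw [hA3, hB3, hR1, hR2]
    field_simp [ha2', hca, hcam]
    ring
end
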